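/- Let K > 0 and for ψ ∈ L²(ℝ) let φ(x) := (2π)^{−1/2} ∫ e^{i k x} ψ(k) dk denote its Fourier transform. (a) For every ψ ∈ L²(ℝ) with ∫ |ψ(k)|² dk = 1 and support contained in [−K, K], and for every x ∈ ℝ, one has |φ(x)|² ≤ K/π. (b) For ψ₀ := (2K)^{−1/2} 𝟙_{[−K,K]}, which is normalized and supported in [−K,K], one has |φ₀(0)|² = K/π. Hence the supremum over all such normalized ψ of sup_x |φ(x)|² equals exactly K/π. -/

import Mathlib

set_option maxHeartbeats 1000000

open MeasureTheory Set
open scoped Classical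

private lemma aux_l1_bound (K : ℝ) (hK : 0 < K) (ψ : ℝ → ℂ) (hmeas : Measurable ψ)
    (hsupp : Function.support ψ ⊆ Set.Icc (-K) K)
    (hnorm : (∫ k : ℝ, ‖ψ k‖ ^ 2) = 1) :
    ∫ k : ℝ, ‖ψ k‖ ≤ Real.sqrt (2 * K) := by
  have hIcc : MeasurableSet (Icc (-K) K) := measurableSet_Icc
  have hvol : volume (Icc (-K) K) = ENNReal.ofReal (2 * K) := by
    rw [Real.volume_Icc]; ring_nf
  have hsq : Integrable (fun k => ‖ψ k‖ ^ 2) := by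
    by_contra h
    rw [integral_undef h] at hnorm
    norm_num at hnorm
  set μ := volume.restrict (Icc (-K) K) with hμ
  haveI : IsFiniteMeasure μ := by
    constructor
    rw [hμ, Measure.restrict_apply_univ, hvol]
    exact ENNReal.ofReal_lt_top
  have hmeasn : Measurable (fun k => ‖ψ k‖) := hmeas.norm
  have hf2 : MemLp (fun k => ‖ψ k‖) 2 μ :=
    (memLp_two_iff_integrable_sq hmeasn.aestronglyMeasurable.restrict).2 hsq.restrict
  have hg2 : MemLp (fun _ : ℝ => (1 : ℝ)) 2 μ := memLp_const 1
  have hpq : Real.HolderConjugate 2 2 := Real.HolderConjugate.two_two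
  have h2e : (ENNReal.ofReal 2) = (2 : ENNReal) := by
    rw [show (2:ℝ) = ((2:ℕ):ℝ) by norm_num, ENNReal.ofReal_natCast]; norm_num
  rw [← h2e] at hf2 hg2
  have hCS := integral_mul_le_Lp_mul_Lq_of_nonneg (μ := μ) hpq
    (Filter.Eventually.of_forall fun k => norm_nonneg _)
    (Filter.Eventually.of_forall fun _ => zero_le_one) hf2 hg2
  simp only [mul_one, one_pow] at hCS
  have h1 : ∫ k : ℝ, ‖ψ k‖ = ∫ k, ‖ψ k‖ ∂μ := by
    rw [hμ]
    exact (setIntegral_eq_integral_of_forall_compl_eq_zero fun k hk => by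
      simp [Function.notMem_support.mp (fun h => hk (hsupp h))]).symm
  have h2 : ∫ k, ‖ψ k‖ ^ (2:ℝ) ∂μ = 1 := by
    have : ∫ k, ‖ψ k‖ ^ (2:ℝ) ∂μ = ∫ k, ‖ψ k‖ ^ 2 ∂μ := by
      congr 1; ext k; rw [← Real.rpow_natCast]; norm_num
    rw [this, hμ]
    rw [setIntegral_eq_integral_of_forall_compl_eq_zero fun k hk => by
      simp [Function.notMem_support.mp (fun h => hk (hsupp h))]]
    exact hnorm
  have h3 : ∫ k, (1:ℝ) ^ (2:ℝ) ∂μ = 2 * K := by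
    simp [hμ, Real.one_rpow, hvol, ENNReal.toReal_ofReal (by positivity : (0:ℝ) ≤ 2 * K)]
    rw [max_eq_left (by linarith)]; ring
  rw [h1]
  calc ∫ k, ‖ψ k‖ ∂μ ≤ (∫ k, ‖ψ k‖ ^ (2:ℝ) ∂μ) ^ (1/2 : ℝ) * (∫ k, (1:ℝ) ^ (2:ℝ) ∂μ) ^ (1/2 : ℝ) := hCS
    _ = Real.sqrt (2 * K) := by
        rw [h2, h3, Real.one_rpow, one_mul, Real.sqrt_eq_rpow]

/-- Min-entropy minimal length. (a) For every normalized
`ψ ∈ L²(ℝ)` supported in `[−K, K]` the position density `|φ|²` (with `φ` the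
Fourier transform of `ψ`) satisfies `|φ(x)|² ≤ K/π` for all `x`. (b) The bound
is attained at `x = 0` by `ψ₀ = (2K)^{−1/2} 𝟙_{[−K,K]}`. Hence
`sup_ψ sup_x |φ(x)|² = K/π` and `Γ^∞_min = −log(K/π)`. -/
theorem min_entropy_minimal_length
    (K : ℝ) (hK : 0 < K)
    (Φ : (ℝ → ℂ) → ℝ → ℂ)
    (hΦ : ∀ (ψ : ℝ → ℂ) (x : ℝ), Φ ψ x = ((Real.sqrt (2 * Real.pi) : ℝ) : ℂ)⁻¹ *
      ∫ k : ℝ, Complex.exp (Complex.I * (k : ℂ) * (x : ℂ)) * ψ k)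
    (ψ₀ : ℝ → ℂ)
    (hψ₀ : ∀ k : ℝ, ψ₀ k =
      if |k| ≤ K then (((Real.sqrt (2 * K))⁻¹ : ℝ) : ℂ) else 0) :
    (∀ ψ : ℝ → ℂ, Measurable ψ → Function.support ψ ⊆ Set.Icc (-K) K →
      (∫ k : ℝ, ‖ψ k‖ ^ 2) = 1 →
      ∀ x : ℝ, ‖Φ ψ x‖ ^ 2 ≤ K / Real.pi) ∧
    (∫ k : ℝ, ‖ψ₀ k‖ ^ 2) = 1 ∧
    Function.support ψ₀ ⊆ Set.Icc (-K) K ∧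
    ‖Φ ψ₀ 0‖ ^ 2 = K / Real.pi := by
  have hπ : 0 < Real.pi := Real.pi_pos
  have hvolIcc : (volume (Icc (-K) K)).toReal = 2 * K := by
    rw [Real.volume_Icc, ENNReal.toReal_ofReal (by linarith)]; ring
  refine ⟨?_, ?_, ?_, ?_⟩
  · -- part (a)
    intro ψ hmeas hsupp hnorm x
    have hb := aux_l1_bound K hK ψ hmeas hsupp hnorm
    have hexp : ∀ k : ℝ, ‖Complex.exp (Complex.I * (k:ℂ) * (x:ℂ)) * ψ k‖ = ‖ψ k‖ := by
      intro k
      rw [norm_mul, Complex.norm_exp]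
      have : (Complex.I * (k:ℂ) * (x:ℂ)).re = 0 := by simp
      rw [this, Real.exp_zero, one_mul]
    have hΦle : ‖Φ ψ x‖ ≤ (Real.sqrt (2 * Real.pi))⁻¹ * Real.sqrt (2 * K) := by
      rw [hΦ, norm_mul, norm_inv, Complex.norm_real, Real.norm_eq_abs,
        abs_of_nonneg (Real.sqrt_nonneg _)]
      refine mul_le_mul_of_nonneg_left ?_ (by positivity)
      calc ‖∫ k : ℝ, Complex.exp (Complex.I * (k:ℂ) * (x:ℂ)) * ψ k‖
          ≤ ∫ k : ℝ, ‖Complex.exp (Complex.I * (k:ℂ) * (x:ℂ)) * ψ k‖ :=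
            norm_integral_le_integral_norm _
        _ = ∫ k : ℝ, ‖ψ k‖ := by simp_rw [hexp]
        _ ≤ Real.sqrt (2 * K) := hb
    calc ‖Φ ψ x‖ ^ 2 ≤ ((Real.sqrt (2 * Real.pi))⁻¹ * Real.sqrt (2 * K)) ^ 2 :=
          pow_le_pow_left₀ (norm_nonneg _) hΦle 2
      _ = K / Real.pi := by
          rw [mul_pow, inv_pow, Real.sq_sqrt (by positivity), Real.sq_sqrt (by positivity)]
          field_simp
  · -- normalization of ψ₀
    have heq : ∀ k : ℝ, ‖ψ₀ k‖ ^ 2 = (Icc (-K) K).indicator (fun _ => (2 * K)⁻¹) k := by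
      intro k
      rw [hψ₀]
      by_cases h : |k| ≤ K
      · rw [if_pos h, indicator_of_mem (by rw [mem_Icc, ← abs_le]; exact h),
          Complex.norm_real, Real.norm_eq_abs, sq_abs, inv_pow,
          Real.sq_sqrt (by positivity)]
      · rw [if_neg h, indicator_of_notMem (by rw [mem_Icc, ← abs_le]; exact h)]
        simp
    calc (∫ k : ℝ, ‖ψ₀ k‖ ^ 2)
        = ∫ k : ℝ, (Icc (-K) K).indicator (fun _ => (2 * K)⁻¹) k := by simp_rw [heq]
      _ = (volume (Icc (-K) K)).toReal • (2 * K)⁻¹ := integral_indicator_const _ measurableSet_Icc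
      _ = 1 := by rw [hvolIcc, smul_eq_mul]; field_simp
  · -- support of ψ₀
    intro k hk
    simp only [Function.mem_support, hψ₀] at hk
    rw [mem_Icc, ← abs_le]
    by_contra h
    rw [if_neg h] at hk
    exact hk rfl
  · -- value at 0
    have hψ₀' : ∀ k : ℝ, ψ₀ k =
        (((Icc (-K) K).indicator (fun _ => (Real.sqrt (2 * K))⁻¹) k : ℝ) : ℂ) := by
      intro k
      rw [hψ₀]
      by_cases h : |k| ≤ K
      · rw [if_pos h, indicator_of_mem (by rw [mem_Icc, ← abs_le]; exact h)]
      · rw [if_neg h, indicator_of_notMem (by rw [mem_Icc, ← abs_le]; exact h),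
          Complex.ofReal_zero]
    have hint : ∫ k : ℝ, Complex.exp (Complex.I * (k:ℂ) * ((0:ℝ):ℂ)) * ψ₀ k
        = ((2 * K * (Real.sqrt (2 * K))⁻¹ : ℝ) : ℂ) := by
      have h1 : ∀ k : ℝ, Complex.exp (Complex.I * (k:ℂ) * ((0:ℝ):ℂ)) * ψ₀ k
          = (((Icc (-K) K).indicator (fun _ => (Real.sqrt (2 * K))⁻¹) k : ℝ) : ℂ) := by
        intro k
        rw [hψ₀' k]
        simp
      rw [show (fun k : ℝ => Complex.exp (Complex.I * (k:ℂ) * ((0:ℝ):ℂ)) * ψ₀ k)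
          = fun k : ℝ => (((Icc (-K) K).indicator (fun _ => (Real.sqrt (2 * K))⁻¹) k : ℝ) : ℂ)
          from funext h1]
      have h2 : (∫ k : ℝ, (Icc (-K) K).indicator (fun _ => (Real.sqrt (2 * K))⁻¹) k)
          = 2 * K * (Real.sqrt (2 * K))⁻¹ := by
        rw [integral_indicator_const _ measurableSet_Icc, measureReal_def, hvolIcc, smul_eq_mul]
      rw [← h2]
      exact integral_ofReal
    have hnn : (0:ℝ) ≤ 2 * K * (Real.sqrt (2 * K))⁻¹ := by positivity
    have hr : ‖Φ ψ₀ 0‖ = (Real.sqrt (2 * Real.pi))⁻¹ * (2 * K * (Real.sqrt (2 * K))⁻¹) := by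
      rw [hΦ, hint, norm_mul, norm_inv, Complex.norm_real, Complex.norm_real,
        Real.norm_eq_abs, Real.norm_eq_abs, abs_of_nonneg (Real.sqrt_nonneg _),
        abs_of_nonneg hnn]
    rw [hr, mul_pow, inv_pow, Real.sq_sqrt (by positivity), mul_pow, inv_pow,
      Real.sq_sqrt (by positivity)]
    have h2K : (2 * K : ℝ) ≠ 0 := by positivity
    field_simp
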